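/- (Entanglement cannot increase under Gaussian classical mixing.) Let σ be a real symmetric 2n×2n matrix with σ + iΩ ≥ 0 and let τ be any real symmetric positive semidefinite 2n×2n matrix. Then σ + τ also satisfies (σ+τ) + iΩ ≥ 0, and for any bipartition of the modes the smallest partially transposed symplectic eigenvalues satisfy ν̃₋(σ + τ) ≥ ν̃₋(σ); consequently the logarithmic negativity satisfies E_N(σ + τ) ≤ E_N(σ). -/

import Mathlib

open Matrix
open scoped ComplexOrder

open Classical in
/-- The eigenvalues of a matrix in increasing order (junk value `0` if not Hermitian). -/
noncomputable def eigUp {d : ℕ} (M : Matrix (Fin d) (Fin d) ℝ) : Fin d → ℝ :=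
  if h : M.IsHermitian then h.eigenvalues ∘ Tuple.sort h.eigenvalues else 0

/-- The eigenvalues of a matrix in decreasing order. -/
noncomputable def eigDown {d : ℕ} (M : Matrix (Fin d) (Fin d) ℝ) (j : Fin d) : ℝ :=
  eigUp M j.rev

/-- The standard symplectic form on `2n` canonical variables: block diagonal with
blocks `[[0,1],[-1,0]]`. -/
def Omega (n : ℕ) : Matrix (Fin (2*n)) (Fin (2*n)) ℝ :=
  Matrix.of fun i j =>
    if (i : ℕ) + 1 = (j : ℕ) ∧ (i : ℕ) % 2 = 0 then 1
    else if (j : ℕ) + 1 = (i : ℕ) ∧ (j : ℕ) % 2 = 0 then -1 else 0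

/-- Partial transposition matrix `T = 𝟙₂^{⊕ l} ⊕ σz^{⊕ (n-l)}` for the bipartition of the
first `l` versus the last `n - l` modes. -/
def Tmat (n l : ℕ) : Matrix (Fin (2*n)) (Fin (2*n)) ℝ :=
  Matrix.diagonal fun i => if (i : ℕ) / 2 < l ∨ (i : ℕ) % 2 = 0 then 1 else -1

/-- The partially transposed symplectic form `Ω̃ = T Ω T`. -/
def OmegaPT (n l : ℕ) : Matrix (Fin (2*n)) (Fin (2*n)) ℝ :=
  Tmat n l * Omega n * Tmat n l

open Classical in
/-- The positive square root of a positive semidefinite matrix (junk value `0` otherwise). -/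
noncomputable def msqrt {d : ℕ} (M : Matrix (Fin d) (Fin d) ℝ) : Matrix (Fin d) (Fin d) ℝ :=
  if h : M.PosSemidef then
    (h.1.eigenvectorUnitary : Matrix (Fin d) (Fin d) ℝ) *
      diagonal ((↑) ∘ (√·) ∘ h.1.eigenvalues) *
      (star h.1.eigenvectorUnitary : Matrix (Fin d) (Fin d) ℝ)
  else 0

/-- `σ + iΩ ≥ 0`: the Robertson–Schrödinger condition for a real symmetric matrix `σ`
to be a bona fide covariance matrix. -/
def IsCM (n : ℕ) (σ : Matrix (Fin (2*n)) (Fin (2*n)) ℝ) : Prop :=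
  σ.IsSymm ∧
    (σ.map (Complex.ofReal ·) + Complex.I • (Omega n).map (Complex.ofReal ·)).PosSemidef

/-- `ν̃₋²`, the square of the smallest partially transposed symplectic eigenvalue of `σ`, for
the bipartition of the first `l` versus the remaining modes: the smallest eigenvalue of
`σ^{1/2} Ω̃ᵀ σ Ω̃ σ^{1/2}`. -/
noncomputable def nuSq (n l : ℕ) (σ : Matrix (Fin (2*n)) (Fin (2*n)) ℝ) : ℝ :=
  sInf (spectrum ℝ (msqrt σ * (OmegaPT n l)ᵀ * σ * OmegaPT n l * msqrt σ))

/-- `ν̃₋`, the smallest partially transposed symplectic eigenvalue of `σ`. -/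
noncomputable def nuMin (n l : ℕ) (σ : Matrix (Fin (2*n)) (Fin (2*n)) ℝ) : ℝ :=
  Real.sqrt (nuSq n l σ)

/-- The logarithmic negativity `E_N(σ) = max (0, −log₂ ν̃₋)`. -/
noncomputable def logNeg (n l : ℕ) (σ : Matrix (Fin (2*n)) (Fin (2*n)) ℝ) : ℝ :=
  max 0 (-(Real.logb 2 (nuMin n l σ)))


namespace GMAux
open Matrix

variable {d : ℕ}

lemma herm_of_symm {M : Matrix (Fin d) (Fin d) ℝ} (h : M.IsSymm) : M.IsHermitian := by
  rwa [Matrix.IsHermitian, Matrix.conjTranspose_eq_transpose_of_trivial]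

lemma symm_of_herm {M : Matrix (Fin d) (Fin d) ℝ} (h : M.IsHermitian) : M.IsSymm := by
  rwa [Matrix.IsHermitian, Matrix.conjTranspose_eq_transpose_of_trivial] at h

lemma transpose_eq_self_of_herm {M : Matrix (Fin d) (Fin d) ℝ} (h : M.IsHermitian) :
    Mᵀ = M := by
  rw [← Matrix.conjTranspose_eq_transpose_of_trivial]
  exact h

lemma msqrt_psd {M : Matrix (Fin d) (Fin d) ℝ} (hM : M.PosSemidef) : (msqrt M).PosSemidef := by
  unfold msqrt
  rw [dif_pos hM, Matrix.star_eq_conjTranspose]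
  exact (Matrix.PosSemidef.diagonal (Pi.le_def.mpr fun i => by
    simp [Real.sqrt_nonneg])).mul_mul_conjTranspose_same _

lemma msqrt_mul_self {M : Matrix (Fin d) (Fin d) ℝ} (hM : M.PosSemidef) :
    msqrt M * msqrt M = M := by
  have hU : star (hM.1.eigenvectorUnitary : Matrix (Fin d) (Fin d) ℝ) *
      (hM.1.eigenvectorUnitary : Matrix (Fin d) (Fin d) ℝ) = 1 :=
    Matrix.mem_unitaryGroup_iff'.mp hM.1.eigenvectorUnitary.2
  have hs := hM.1.spectral_theorem
  rw [Unitary.conjStarAlgAut_apply] at hs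
  refine Eq.trans ?_ hs.symm
  unfold msqrt
  rw [dif_pos hM]
  calc _ = (hM.1.eigenvectorUnitary : Matrix (Fin d) (Fin d) ℝ) *
        (diagonal ((↑) ∘ (√·) ∘ hM.1.eigenvalues) *
        (star (hM.1.eigenvectorUnitary : Matrix (Fin d) (Fin d) ℝ) *
          (hM.1.eigenvectorUnitary : Matrix (Fin d) (Fin d) ℝ)) *
        diagonal ((↑) ∘ (√·) ∘ hM.1.eigenvalues)) *
        (star (hM.1.eigenvectorUnitary : Matrix (Fin d) (Fin d) ℝ)) := by
          simp only [Matrix.mul_assoc, Unitary.coe_star]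
    _ = _ := by
      rw [hU, Matrix.mul_one, Matrix.diagonal_mul_diagonal]
      congr 3
      funext i
      simp [Real.mul_self_sqrt (hM.eigenvalues_nonneg i)]

lemma psd_conj {A : Matrix (Fin d) (Fin d) ℝ} (hA : A.PosSemidef) (B : Matrix (Fin d) (Fin d) ℝ) :
    (Bᵀ * A * B).PosSemidef := by
  have h := hA.conjTranspose_mul_mul_same (B := B)
  rwa [Matrix.conjTranspose_eq_transpose_of_trivial] at h

lemma dot_lift (M : Matrix (Fin d) (Fin d) ℝ) (u v : Fin d → ℝ) :
    (fun i => ((u i : ℂ))) ⬝ᵥ ((M.map (Complex.ofReal ·)) *ᵥ (fun i => (v i : ℂ))) =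
      ((u ⬝ᵥ (M *ᵥ v) : ℝ) : ℂ) := by
  have h1 : M.map (Complex.ofReal ·) = M.map Complex.ofRealHom := rfl
  have h2 : (fun i => ((u i : ℂ))) = Complex.ofRealHom ∘ u := rfl
  have h3 : (fun i => ((v i : ℂ))) = Complex.ofRealHom ∘ v := rfl
  rw [h1, h2, h3,
    show ((u ⬝ᵥ (M *ᵥ v) : ℝ) : ℂ) = Complex.ofRealHom (u ⬝ᵥ (M *ᵥ v)) from rfl,
    RingHom.map_dotProduct]
  congr 1
  funext i
  exact (RingHom.map_mulVec Complex.ofRealHom M v i).symm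

lemma spec_comm (X Y : Matrix (Fin d) (Fin d) ℝ) :
    spectrum ℝ (X * Y) = spectrum ℝ (Y * X) := by
  have hdet : ∀ k : ℝ, ((k • (1 : Matrix (Fin d) (Fin d) ℝ)) - X * Y).det
      = ((k • (1 : Matrix (Fin d) (Fin d) ℝ)) - Y * X).det := by
    intro k
    rcases eq_or_ne k 0 with rfl | hk
    · rw [zero_smul, zero_sub, zero_sub, Matrix.det_neg, Matrix.det_neg, Matrix.det_mul_comm]
    · have h1 : (k • (1 : Matrix (Fin d) (Fin d) ℝ)) - X * Y
          = k • ((1 : Matrix (Fin d) (Fin d) ℝ) - (k⁻¹ • X) * Y) := by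
        rw [smul_sub, Matrix.smul_mul, smul_smul, mul_inv_cancel₀ hk, one_smul]
      have h2 : (k • (1 : Matrix (Fin d) (Fin d) ℝ)) - Y * X
          = k • ((1 : Matrix (Fin d) (Fin d) ℝ) - Y * (k⁻¹ • X)) := by
        rw [smul_sub, Matrix.mul_smul, smul_smul, mul_inv_cancel₀ hk, one_smul]
      rw [h1, h2, Matrix.det_smul, Matrix.det_smul, Matrix.det_one_sub_mul_comm]
  ext k
  simp only [spectrum.mem_iff, not_iff_not, Matrix.isUnit_iff_isUnit_det,
    Algebra.algebraMap_eq_smul_one]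
  rw [hdet k]

lemma smul_one_eq_diag (c : ℝ) :
    (c • (1 : Matrix (Fin d) (Fin d) ℝ)) = Matrix.diagonal (fun _ => c) := by
  ext i j
  by_cases h : i = j <;>
    simp [Matrix.smul_apply, Matrix.one_apply, Matrix.diagonal_apply, h]

lemma psd_sub_smul_one {M : Matrix (Fin d) (Fin d) ℝ} (h : M.IsHermitian) {c : ℝ}
    (hc : ∀ μ ∈ spectrum ℝ M, c ≤ μ) : (M - c • 1).PosSemidef := by
  classical
  have hev : ∀ i, c ≤ h.eigenvalues i := fun i => hc _ (h.eigenvalues_mem_spectrum_real i)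
  set U : Matrix (Fin d) (Fin d) ℝ := (h.eigenvectorUnitary : Matrix (Fin d) (Fin d) ℝ) with hUdef
  have hU : U * star U = 1 := Matrix.mem_unitaryGroup_iff.mp h.eigenvectorUnitary.2
  have hD : (Matrix.diagonal (fun i => h.eigenvalues i - c)).PosSemidef :=
    Matrix.PosSemidef.diagonal (fun i => sub_nonneg.mpr (hev i))
  have key := hD.mul_mul_conjTranspose_same U
  have heq : U * Matrix.diagonal (fun i => h.eigenvalues i - c) * Uᴴ = M - c • 1 := by
    have hdiag : Matrix.diagonal (fun i => h.eigenvalues i - c)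
        = Matrix.diagonal (RCLike.ofReal ∘ h.eigenvalues) - c • 1 := by
      rw [smul_one_eq_diag, Matrix.diagonal_sub]
      rfl
    rw [hdiag, Matrix.mul_sub, Matrix.sub_mul, ← Matrix.star_eq_conjTranspose U]
    have h1 : U * (c • (1 : Matrix (Fin d) (Fin d) ℝ)) * star U = c • 1 := by
      rw [Matrix.mul_smul, Matrix.mul_one, Matrix.smul_mul, hU]
    have hs := h.spectral_theorem
    rw [Unitary.conjStarAlgAut_apply] at hs
    rw [h1]
    exact congrArg (· - c • 1) hs.symm
  rwa [heq] at key

lemma dot_self_nonneg (v : Fin d → ℝ) : 0 ≤ v ⬝ᵥ v :=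
  Finset.sum_nonneg fun i _ => mul_self_nonneg (v i)

lemma dot_self_pos {v : Fin d → ℝ} (hv : v ≠ 0) : 0 < v ⬝ᵥ v := by
  rcases lt_or_eq_of_le (dot_self_nonneg v) with h | h
  · exact h
  · exact absurd (dotProduct_self_eq_zero.mp h.symm) hv

lemma spec_lb_of_psd_sub {M : Matrix (Fin d) (Fin d) ℝ} (h : M.IsHermitian) {c : ℝ}
    (hc : (M - c • 1).PosSemidef) : ∀ μ ∈ spectrum ℝ M, c ≤ μ := by
  classical
  intro μ hμ
  rw [h.spectrum_real_eq_range_eigenvalues] at hμ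
  obtain ⟨i, rfl⟩ := hμ
  set v : Fin d → ℝ := ⇑(h.eigenvectorBasis i) with hv
  have hv0 : v ≠ 0 := by
    intro hz
    exact h.eigenvectorBasis.orthonormal.ne_zero i (by ext j; exact congrFun hz j)
  have key := hc.dotProduct_mulVec_nonneg v
  have hmv : (M - c • 1) *ᵥ v = h.eigenvalues i • v - c • v := by
    rw [Matrix.sub_mulVec, h.mulVec_eigenvectorBasis i, Matrix.smul_mulVec,
      Matrix.one_mulVec]
  rw [hmv] at key
  have hsv : star v = v := star_trivial v
  rw [hsv, dotProduct_sub, dotProduct_smul, dotProduct_smul] at key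
  have hpos : 0 < v ⬝ᵥ v := dot_self_pos hv0
  simp only [smul_eq_mul] at key
  nlinarith [key, hpos]

lemma omega_transpose (n : ℕ) : (Omega n)ᵀ = -(Omega n) := by
  ext i j
  simp only [Matrix.transpose_apply, Matrix.neg_apply, Omega, Matrix.of_apply]
  split_ifs
  all_goals try norm_num
  all_goals (exfalso; omega)

lemma omega_mul_transpose (n : ℕ) : Omega n * (Omega n)ᵀ = 1 := by
  ext i j
  rw [Matrix.mul_apply, Matrix.one_apply]
  by_cases hi : (i : ℕ) % 2 = 0
  · have hlt : (i : ℕ) + 1 < 2 * n := by omega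
    have hk0 : ((⟨(i : ℕ) + 1, hlt⟩ : Fin (2*n)) : ℕ) = (i : ℕ) + 1 := rfl
    rw [Finset.sum_eq_single (⟨(i : ℕ) + 1, hlt⟩ : Fin (2*n))]
    · have h1 : Omega n i ⟨(i : ℕ) + 1, hlt⟩ = 1 := by
        simp only [Omega, Matrix.of_apply]
        rw [if_pos ⟨trivial, hi⟩]
      rw [h1, Matrix.transpose_apply, one_mul]
      simp only [Omega, Matrix.of_apply, Fin.ext_iff, hk0]
      split_ifs
      all_goals try rfl
      all_goals (exfalso; omega)
    · intro b _ hb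
      have hbv : (b : ℕ) ≠ (i : ℕ) + 1 := fun h => hb (Fin.ext (h.trans hk0.symm))
      have h0 : Omega n i b = 0 := by
        simp only [Omega, Matrix.of_apply]
        rw [if_neg (by omega), if_neg (by omega)]
      rw [h0, zero_mul]
    · intro h; exact absurd (Finset.mem_univ _) h
  · have hlt : (i : ℕ) - 1 < 2 * n := by omega
    have hk0 : ((⟨(i : ℕ) - 1, hlt⟩ : Fin (2*n)) : ℕ) = (i : ℕ) - 1 := rfl
    rw [Finset.sum_eq_single (⟨(i : ℕ) - 1, hlt⟩ : Fin (2*n))]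
    · have h1 : Omega n i ⟨(i : ℕ) - 1, hlt⟩ = -1 := by
        simp only [Omega, Matrix.of_apply]
        rw [if_neg (by omega), if_pos (by omega)]
      rw [h1, Matrix.transpose_apply]
      simp only [Omega, Matrix.of_apply, Fin.ext_iff, hk0]
      split_ifs
      all_goals try norm_num
      all_goals (exfalso; omega)
    · intro b _ hb
      have hbv : (b : ℕ) ≠ (i : ℕ) - 1 := fun h => hb (Fin.ext (h.trans hk0.symm))
      have h0 : Omega n i b = 0 := by
        simp only [Omega, Matrix.of_apply]
        rw [if_neg (by omega), if_neg (by omega)]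
      rw [h0, zero_mul]
    · intro h; exact absurd (Finset.mem_univ _) h

lemma tmat_transpose (n l : ℕ) : (Tmat n l)ᵀ = Tmat n l := Matrix.diagonal_transpose _

lemma tmat_mul_self (n l : ℕ) : Tmat n l * Tmat n l = 1 := by
  rw [Tmat, Matrix.diagonal_mul_diagonal]
  ext i j
  rcases eq_or_ne i j with rfl | hne
  · rw [Matrix.diagonal_apply_eq, Matrix.one_apply_eq]
    split_ifs <;> norm_num
  · rw [Matrix.diagonal_apply_ne _ hne, Matrix.one_apply_ne hne]

lemma omegaPT_mul_transpose (n l : ℕ) : OmegaPT n l * (OmegaPT n l)ᵀ = 1 := by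
  rw [OmegaPT, Matrix.transpose_mul, Matrix.transpose_mul, tmat_transpose]
  rw [Matrix.mul_assoc (Tmat n l * Omega n) (Tmat n l),
    ← Matrix.mul_assoc (Tmat n l) (Tmat n l), tmat_mul_self, Matrix.one_mul,
    ← Matrix.mul_assoc, Matrix.mul_assoc (Tmat n l), omega_mul_transpose,
    Matrix.mul_one, tmat_mul_self]

lemma psd_map_complex {A : Matrix (Fin d) (Fin d) ℝ} (hA : A.PosSemidef) :
    (A.map (Complex.ofReal ·)).PosSemidef := by
  obtain ⟨B, hB⟩ : ∃ B : Matrix (Fin d) (Fin d) ℝ, A = Bᴴ * B :=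
    ⟨msqrt A, by rw [(msqrt_psd hA).1.eq, msqrt_mul_self hA]⟩
  have hfun : ((Complex.ofReal ·) : ℝ → ℂ) = ⇑Complex.ofRealHom := rfl
  rw [hB, hfun, Matrix.map_mul,
    Matrix.conjTranspose_map (⇑Complex.ofRealHom) (fun x => by simp [Complex.conj_ofReal])]
  exact Matrix.posSemidef_conjTranspose_mul_self _

lemma bilin_expand (M : Matrix (Fin d) (Fin d) ℝ) (x w : Fin d → ℝ) (t : ℝ) :
    (star (fun i => (x i : ℂ) + (Complex.I * t) * (w i : ℂ))) ⬝ᵥ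
      ((M.map (Complex.ofReal ·)) *ᵥ (fun i => (x i : ℂ) + (Complex.I * t) * (w i : ℂ)))
    = Complex.ofReal (x ⬝ᵥ (M *ᵥ x) + t^2 * (w ⬝ᵥ (M *ᵥ w)))
      + (Complex.I * t) * Complex.ofReal (x ⬝ᵥ (M *ᵥ w) - w ⬝ᵥ (M *ᵥ x)) := by
  have hsplit : (fun i => (x i : ℂ) + (Complex.I * t) * (w i : ℂ))
      = (fun i => (x i : ℂ)) + (Complex.I * (t : ℂ)) • (fun i => (w i : ℂ)) := by
    funext i; simp [smul_eq_mul]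
  have hstar : star (fun i => (x i : ℂ) + (Complex.I * t) * (w i : ℂ))
      = (fun i => (x i : ℂ)) + (-(Complex.I * (t : ℂ))) • (fun i => (w i : ℂ)) := by
    funext i
    simp only [Pi.star_apply, star_add, star_mul', Complex.star_def, Complex.conj_ofReal,
      Complex.conj_I, Pi.add_apply, Pi.smul_apply, smul_eq_mul]
    ring
  rw [hstar, hsplit, Matrix.mulVec_add, Matrix.mulVec_smul, add_dotProduct,
    smul_dotProduct, dotProduct_add, dotProduct_smul,
    dotProduct_add, dotProduct_smul, dot_lift, dot_lift, dot_lift, dot_lift]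
  simp only [smul_eq_mul]
  push_cast
  linear_combination (-(t:ℂ)^2 * ((w ⬝ᵥ (M *ᵥ w) : ℝ) : ℂ)) * Complex.I_sq

lemma cm_posSemidef {n : ℕ} {σ : Matrix (Fin (2*n)) (Fin (2*n)) ℝ} (hCM : IsCM n σ) :
    σ.PosSemidef := by
  obtain ⟨hsymm, hpsd⟩ := hCM
  refine .of_dotProduct_mulVec_nonneg (herm_of_symm hsymm) fun x => ?_
  have h := hpsd.dotProduct_mulVec_nonneg (fun i => (x i : ℂ))
  have hstar : star (fun i : Fin (2*n) => (x i : ℂ)) = fun i => (x i : ℂ) := by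
    funext i; simp [Complex.conj_ofReal]
  rw [Matrix.add_mulVec, Matrix.smul_mulVec, hstar, dotProduct_add,
    dotProduct_smul, dot_lift, dot_lift] at h
  have hre := (Complex.le_def.mp h).1
  simp only [Complex.zero_re, Complex.add_re, smul_eq_mul, Complex.mul_re, Complex.I_re,
    Complex.ofReal_re, Complex.I_im, Complex.ofReal_im, zero_mul, one_mul, mul_zero,
    zero_sub, sub_zero] at hre
  rw [show star x = x from star_trivial x]
  linarith

lemma cm_posDef {n : ℕ} {σ : Matrix (Fin (2*n)) (Fin (2*n)) ℝ} (hCM : IsCM n σ) :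
    σ.PosDef := by
  have hpsdR := cm_posSemidef hCM
  obtain ⟨hsymm, hpsd⟩ := hCM
  refine .of_dotProduct_mulVec_pos hpsdR.1 fun x hx => ?_
  have hge := hpsdR.dotProduct_mulVec_nonneg x
  rcases hge.lt_or_eq with hlt | heq
  · exact hlt
  · exfalso
    have hker : σ *ᵥ x = 0 := (hpsdR.dotProduct_mulVec_zero_iff x).mp heq.symm
    have hΩ := omega_mul_transpose n
    have hΩΩ : Omega n * Omega n = -1 := by
      have h1 := hΩ
      rw [omega_transpose, Matrix.mul_neg] at h1
      calc Omega n * Omega n = -(-(Omega n * Omega n)) := by rw [neg_neg]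
        _ = -1 := by rw [h1]
    set w : Fin (2*n) → ℝ := Omega n *ᵥ x with hw
    set s : ℝ := w ⬝ᵥ (σ *ᵥ w) with hs
    set b : ℝ := x ⬝ᵥ (Omega n *ᵥ w) - w ⬝ᵥ (Omega n *ᵥ x) with hb
    have hsx : x ⬝ᵥ (σ *ᵥ x) = 0 := by
      rw [hker, dotProduct_zero]
    have hbval : b = -(x ⬝ᵥ x) - w ⬝ᵥ w := by
      rw [hb, hw, Matrix.mulVec_mulVec, hΩΩ, Matrix.neg_mulVec, Matrix.one_mulVec,
        dotProduct_neg]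
      try ring
    have hxx : 0 < x ⬝ᵥ x := dot_self_pos hx
    have hww : 0 ≤ w ⬝ᵥ w := dot_self_nonneg w
    have hbneg : b < 0 := by rw [hbval]; linarith
    have hs0 : 0 ≤ s := by
      have h := hpsdR.dotProduct_mulVec_nonneg w
      rwa [star_trivial] at h
    have hQ : ∀ t : ℝ, 0 ≤ t^2 * s - t * b := by
      intro t
      have h := hpsd.dotProduct_mulVec_nonneg (fun i => (x i : ℂ) + (Complex.I * t) * (w i : ℂ))
      rw [Matrix.add_mulVec, Matrix.smul_mulVec, dotProduct_add,
        dotProduct_smul, bilin_expand σ x w t, bilin_expand (Omega n) x w t] at h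
      have hre := (Complex.le_def.mp h).1
      simp only [Complex.zero_re, Complex.add_re, smul_eq_mul, Complex.mul_re, Complex.mul_im,
        Complex.add_im, Complex.I_re, Complex.I_im, Complex.ofReal_re, Complex.ofReal_im,
        zero_mul, one_mul, mul_zero, zero_sub, sub_zero, zero_add, add_zero, mul_one,
        neg_zero, neg_neg, neg_mul] at hre
      rw [hsx] at hre
      rw [← hs, ← hb] at hre
      nlinarith [hre]
    have hs1 : 0 < s + 1 := by linarith
    have key := hQ (b / (s + 1))
    have h2 : ((b/(s+1))^2 * s - (b/(s+1)) * b) * (s+1)^2 = b^2*s - b^2*(s+1) := by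
      field_simp
    have h3 : 0 ≤ b^2*s - b^2*(s+1) := by
      rw [← h2]
      exact mul_nonneg key (sq_nonneg _)
    nlinarith [h3, mul_pos_of_neg_of_neg hbneg hbneg]

end GMAux


open GMAux in
lemma nuSq_mono (n l : ℕ) (σ τ : Matrix (Fin (2*n)) (Fin (2*n)) ℝ)
    (hCM : IsCM n σ) (hτ : τ.PosSemidef) (hn : 0 < n) :
    nuSq n l σ ≤ nuSq n l (σ + τ) := by
  classical
  simp only [nuSq]
  set Ot := OmegaPT n l with hOtdef
  have hσ : σ.PosSemidef := GMAux.cm_posSemidef hCM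
  have hσ' : (σ + τ).PosSemidef := hσ.add hτ
  set S := msqrt σ with hSdef
  set S' := msqrt (σ + τ) with hS'def
  have hSpsd := GMAux.msqrt_psd hσ
  have hS'psd := GMAux.msqrt_psd hσ'
  have hST : Sᵀ = S := GMAux.transpose_eq_self_of_herm hSpsd.1
  have hS'T : S'ᵀ = S' := GMAux.transpose_eq_self_of_herm hS'psd.1
  have hSS : S * S = σ := GMAux.msqrt_mul_self hσ
  have hSS' : S' * S' = σ + τ := GMAux.msqrt_mul_self hσ'
  have hM0psd : (Otᵀ * σ * Ot).PosSemidef := GMAux.psd_conj hσ Ot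
  set N := msqrt (Otᵀ * σ * Ot) with hNdef
  have hNpsd := GMAux.msqrt_psd hM0psd
  have hNT : Nᵀ = N := GMAux.transpose_eq_self_of_herm hNpsd.1
  have hNN : N * N = Otᵀ * σ * Ot := GMAux.msqrt_mul_self hM0psd
  set P := S * Otᵀ * σ * Ot * S with hPdef
  set P' := S' * Otᵀ * (σ + τ) * Ot * S' with hP'def
  set c := sInf (spectrum ℝ P) with hcdef
  have hccond : ∀ μ ∈ spectrum ℝ P, c ≤ μ := fun μ hμ =>
    csInf_le (Set.Finite.bddBelow (Set.toFinite _)) hμ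
  have hPeq : P = (S * N) * (N * S) := by
    rw [hPdef]
    calc S * Otᵀ * σ * Ot * S = S * (N * N) * S := by
          rw [hNN]; simp only [Matrix.mul_assoc]
      _ = (S * N) * (N * S) := by simp only [Matrix.mul_assoc]
  have hspec1 : spectrum ℝ P = spectrum ℝ (N * σ * N) := by
    have e : (N * S) * (S * N) = N * σ * N := by
      calc (N * S) * (S * N) = N * (S * S) * N := by simp only [Matrix.mul_assoc]
        _ = N * σ * N := by rw [hSS]
    rw [hPeq, GMAux.spec_comm (S * N) (N * S), e]
  have hNσN : (N * σ * N).PosSemidef := by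
    have h := GMAux.psd_conj hσ N; rwa [hNT] at h
  have hQshift : (N * σ * N - c • 1).PosSemidef :=
    GMAux.psd_sub_smul_one hNσN.1 (fun μ hμ => hccond μ (by rw [hspec1]; exact hμ))
  have hNτN : (N * τ * N).PosSemidef := by
    have h := GMAux.psd_conj hτ N; rwa [hNT] at h
  have hRdecomp : N * (σ + τ) * N - c • 1 = (N * σ * N - c • 1) + N * τ * N := by
    rw [Matrix.mul_add, Matrix.add_mul]; abel
  have hRpsd : (N * (σ + τ) * N).PosSemidef := by
    have h := GMAux.psd_conj hσ' N; rwa [hNT] at h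
  have hRshift : (N * (σ + τ) * N - c • 1).PosSemidef := by
    rw [hRdecomp]; exact hQshift.add hNτN
  have hRlb := GMAux.spec_lb_of_psd_sub hRpsd.1 hRshift
  have hspec2 : spectrum ℝ (N * (σ + τ) * N) = spectrum ℝ (S' * (Otᵀ * σ * Ot) * S') := by
    have e1 : N * (σ + τ) * N = (N * S') * (S' * N) := by
      calc N * (σ + τ) * N = N * (S' * S') * N := by rw [hSS']
        _ = (N * S') * (S' * N) := by simp only [Matrix.mul_assoc]
    have e2 : (S' * N) * (N * S') = S' * (Otᵀ * σ * Ot) * S' := by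
      calc (S' * N) * (N * S') = S' * (N * N) * S' := by simp only [Matrix.mul_assoc]
        _ = S' * (Otᵀ * σ * Ot) * S' := by rw [hNN]
    rw [e1, GMAux.spec_comm (N * S') (S' * N), e2]
  have hUpsd : (S' * (Otᵀ * σ * Ot) * S').PosSemidef := by
    have h := GMAux.psd_conj hM0psd S'; rwa [hS'T] at h
  have hUshift : (S' * (Otᵀ * σ * Ot) * S' - c • 1).PosSemidef :=
    GMAux.psd_sub_smul_one hUpsd.1 (fun μ hμ => hRlb μ (by rw [hspec2]; exact hμ))
  have hOτO : (Otᵀ * τ * Ot).PosSemidef := GMAux.psd_conj hτ Ot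
  have hSOS : (S' * (Otᵀ * τ * Ot) * S').PosSemidef := by
    have h := GMAux.psd_conj hOτO S'; rwa [hS'T] at h
  have hP'eq : P' = S' * (Otᵀ * σ * Ot) * S' + S' * (Otᵀ * τ * Ot) * S' := by
    rw [hP'def]
    simp only [Matrix.mul_add, Matrix.add_mul, Matrix.mul_assoc]
  have hP'shift : (P' - c • 1).PosSemidef := by
    have hsplit : P' - c • 1
        = (S' * (Otᵀ * σ * Ot) * S' - c • 1) + S' * (Otᵀ * τ * Ot) * S' := by
      rw [hP'eq]; abel
    rw [hsplit]
    exact hUshift.add hSOS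
  have hP'psd : P'.PosSemidef := by
    have h0 : P' = (Ot * S')ᵀ * (σ + τ) * (Ot * S') := by
      rw [hP'def, Matrix.transpose_mul, hS'T]
      simp only [Matrix.mul_assoc]
    rw [h0]; exact GMAux.psd_conj hσ' _
  have hP'lb := GMAux.spec_lb_of_psd_sub hP'psd.1 hP'shift
  have hne : (spectrum ℝ P').Nonempty := by
    rw [hP'psd.1.spectrum_real_eq_range_eigenvalues]
    haveI : Nonempty (Fin (2*n)) := ⟨⟨0, by omega⟩⟩
    exact Set.range_nonempty _
  exact le_csInf hne hP'lb

open GMAux in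
lemma nuSq_pos (n l : ℕ) (σ : Matrix (Fin (2*n)) (Fin (2*n)) ℝ)
    (hCM : IsCM n σ) (hn : 0 < n) : 0 < nuSq n l σ := by
  classical
  have hσPD : σ.PosDef := GMAux.cm_posDef hCM
  have hσ : σ.PosSemidef := hσPD.posSemidef
  simp only [nuSq]
  set Ot := OmegaPT n l with hOtdef
  set S := msqrt σ with hSdef
  have hSpsd := GMAux.msqrt_psd hσ
  have hST : Sᵀ = S := GMAux.transpose_eq_self_of_herm hSpsd.1
  have hSS : S * S = σ := GMAux.msqrt_mul_self hσ
  have hOt : Ot * Otᵀ = 1 := GMAux.omegaPT_mul_transpose n l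
  have hOtT : Otᵀ * Ot = 1 := mul_eq_one_comm.mp hOt
  set P := S * Otᵀ * σ * Ot * S with hPdef
  have hPconj : P = (Ot * S)ᵀ * σ * (Ot * S) := by
    rw [hPdef, Matrix.transpose_mul, hST]
    simp only [Matrix.mul_assoc]
  have hPpsd : P.PosSemidef := by rw [hPconj]; exact GMAux.psd_conj hσ _
  have hPpd : P.PosDef := by
    refine .of_dotProduct_mulVec_pos hPpsd.1 fun x hx => ?_
    have hSx : S *ᵥ x ≠ 0 := by
      intro h0
      have hσx : σ *ᵥ x = 0 := by
        rw [← hSS, ← Matrix.mulVec_mulVec, h0, Matrix.mulVec_zero]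
      have hlt := hσPD.dotProduct_mulVec_pos hx
      rw [hσx, dotProduct_zero] at hlt
      exact lt_irrefl 0 hlt
    have hy : Ot *ᵥ (S *ᵥ x) ≠ 0 := by
      intro h0
      apply hSx
      have h1 : (Otᵀ * Ot) *ᵥ (S *ᵥ x) = 0 := by
        rw [← Matrix.mulVec_mulVec, h0, Matrix.mulVec_zero]
      rwa [hOtT, Matrix.one_mulVec] at h1
    have hval : star x ⬝ᵥ (P *ᵥ x)
        = star (Ot *ᵥ (S *ᵥ x)) ⬝ᵥ (σ *ᵥ (Ot *ᵥ (S *ᵥ x))) := by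
      rw [star_trivial, star_trivial, hPconj]
      simp only [← Matrix.mulVec_mulVec]
      rw [Matrix.dotProduct_mulVec, Matrix.vecMul_transpose]
      simp only [← Matrix.mulVec_mulVec]
    rw [hval]
    exact hσPD.dotProduct_mulVec_pos hy
  have hne : (spectrum ℝ P).Nonempty := by
    rw [hPpsd.1.spectrum_real_eq_range_eigenvalues]
    haveI : Nonempty (Fin (2*n)) := ⟨⟨0, by omega⟩⟩
    exact Set.range_nonempty _
  have hmem : sInf (spectrum ℝ P) ∈ spectrum ℝ P := hne.csInf_mem (Set.toFinite _)
  have hmem2 : sInf (spectrum ℝ P) ∈ Set.range (hPpsd.1.eigenvalues) := by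
    rwa [← hPpsd.1.spectrum_real_eq_range_eigenvalues]
  obtain ⟨i, hi⟩ := hmem2
  rw [← hi]
  exact hPpd.eigenvalues_pos i


/-- Entanglement cannot increase under Gaussian classical mixing: if `σ` is a covariance
matrix and `τ ≥ 0`, then `σ + τ` is a covariance matrix, `ν̃₋(σ + τ) ≥ ν̃₋(σ)` and
`E_N(σ + τ) ≤ E_N(σ)` for any bipartition. -/
theorem gaussian_mixing_monotonicity (n : ℕ) (l : ℕ) (hl : l ≤ n)
    (σ τ : Matrix (Fin (2*n)) (Fin (2*n)) ℝ)
    (hCM : IsCM n σ) (hτ : τ.PosSemidef) :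
    IsCM n (σ + τ) ∧ nuMin n l σ ≤ nuMin n l (σ + τ) ∧
      logNeg n l (σ + τ) ≤ logNeg n l σ := by
  classical
  have hτsymm : τ.IsSymm := GMAux.symm_of_herm hτ.1
  have hCM' : IsCM n (σ + τ) := by
    refine ⟨hCM.1.add hτsymm, ?_⟩
    have hmap : (σ + τ).map (Complex.ofReal ·)
        = σ.map (Complex.ofReal ·) + τ.map (Complex.ofReal ·) := by
      ext i j; simp [Matrix.map_apply]
    rw [hmap, add_comm (σ.map (Complex.ofReal ·)) (τ.map (Complex.ofReal ·)), add_assoc]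
    exact (GMAux.psd_map_complex hτ).add hCM.2
  refine ⟨hCM', ?_, ?_⟩
  · rcases Nat.eq_zero_or_pos n with hn | hn
    · subst hn
      have hst : σ + τ = σ := by
        ext i j
        exact absurd i.isLt (by omega)
      rw [hst]
    · have hmono : nuSq n l σ ≤ nuSq n l (σ + τ) := nuSq_mono n l σ τ hCM hτ hn
      simp only [nuMin]
      exact Real.sqrt_le_sqrt hmono
  · rcases Nat.eq_zero_or_pos n with hn | hn
    · subst hn
      have hst : σ + τ = σ := by
        ext i j
        exact absurd i.isLt (by omega)
      rw [hst]
    · have hposc : 0 < nuSq n l σ := nuSq_pos n l σ hCM hn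
      have hmono : nuSq n l σ ≤ nuSq n l (σ + τ) := nuSq_mono n l σ τ hCM hτ hn
      have hν : 0 < nuMin n l σ := by
        simp only [nuMin]
        exact Real.sqrt_pos.mpr hposc
      have hνle : nuMin n l σ ≤ nuMin n l (σ + τ) := by
        simp only [nuMin]
        exact Real.sqrt_le_sqrt hmono
      have hlog : Real.logb 2 (nuMin n l σ) ≤ Real.logb 2 (nuMin n l (σ + τ)) :=
        Real.logb_le_logb_of_le (by norm_num) hν hνle
      simp only [logNeg]
      exact max_le_max le_rfl (neg_le_neg hlog)
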